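/- Let (V,w) be a weighted graph, let Ŝ ⊆ V, and let 0 ≤ ε < 1. (i) Let U ⊆ V∖Ŝ be nonempty and let r be an integer with 0 ≤ r ≤ |U| and r/|U| ≤ ε; if R is a uniformly random r-element subset of U, then E[δ_w(Ŝ ∪ R)] ≥ (1 − ε)·δ_w(Ŝ). (ii) Let r be an integer with 0 ≤ r ≤ |Ŝ|, Ŝ ≠ ∅, and r/|Ŝ| ≤ ε; if R is a uniformly random r-element subset of Ŝ, then E[δ_w(Ŝ ∖ R)] ≥ (1 − ε)·δ_w(Ŝ). (Random correction step, Lemma 3.1.) -/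

import Mathlib

open Finset

/-- The cut value of a set `S`: total weight of pairs with exactly one endpoint in `S`. -/
noncomputable def cutVal {V : Type*} [Fintype V] [DecidableEq V]
    (w : V → V → ℝ) (S : Finset V) : ℝ :=
  ∑ u ∈ S, ∑ v ∈ Sᶜ, w u v


lemma cutVal_nonneg {V : Type*} [Fintype V] [DecidableEq V]
    (w : V → V → ℝ) (hnonneg : ∀ u v, 0 ≤ w u v) (S : Finset V) : 0 ≤ cutVal w S :=
  Finset.sum_nonneg fun u _ => Finset.sum_nonneg fun v _ => hnonneg u v

lemma cut_union {V : Type*} [Fintype V] [DecidableEq V]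
    (w : V → V → ℝ) (hnonneg : ∀ u v, 0 ≤ w u v) (Shat R : Finset V)
    (hdisj : Disjoint R Shat) :
    cutVal w Shat - ∑ u ∈ Shat, ∑ v ∈ R, w u v ≤ cutVal w (Shat ∪ R) := by
  have hRc : R ⊆ Shatᶜ := fun x hx => Finset.mem_compl.2 (Finset.disjoint_left.mp hdisj hx)
  have hcompl : (Shat ∪ R)ᶜ = Shatᶜ \ R := by
    ext x; simp [Finset.mem_compl]
  calc cutVal w Shat - ∑ u ∈ Shat, ∑ v ∈ R, w u v
      = ∑ u ∈ Shat, ∑ v ∈ (Shat ∪ R)ᶜ, w u v := by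
        unfold cutVal
        rw [hcompl, ← Finset.sum_sub_distrib]
        exact Finset.sum_congr rfl fun u _ => (Finset.sum_sdiff_eq_sub hRc).symm
    _ ≤ cutVal w (Shat ∪ R) := by
        unfold cutVal
        apply Finset.sum_le_sum_of_subset_of_nonneg Finset.subset_union_left
        intro u _ _
        exact Finset.sum_nonneg fun v _ => hnonneg u v

lemma cut_sdiff {V : Type*} [Fintype V] [DecidableEq V]
    (w : V → V → ℝ) (hnonneg : ∀ u v, 0 ≤ w u v) (Shat R : Finset V)
    (hR : R ⊆ Shat) :
    cutVal w Shat - ∑ u ∈ R, ∑ v ∈ Shatᶜ, w u v ≤ cutVal w (Shat \ R) := by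
  calc cutVal w Shat - ∑ u ∈ R, ∑ v ∈ Shatᶜ, w u v
      = ∑ u ∈ Shat \ R, ∑ v ∈ Shatᶜ, w u v := (Finset.sum_sdiff_eq_sub hR).symm
    _ ≤ cutVal w (Shat \ R) := by
        unfold cutVal
        apply Finset.sum_le_sum
        intro u _
        apply Finset.sum_le_sum_of_subset_of_nonneg
        · exact Finset.compl_subset_compl.2 (Finset.sdiff_subset)
        · intro v _ _; exact hnonneg u v


lemma card_filter_mem {V : Type*} [DecidableEq V] (U : Finset V) (r : ℕ) (v : V) (hv : v ∈ U) :
    ((U.powersetCard (r+1)).filter (fun R => v ∈ R)).card = (U.card - 1).choose r := by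
  rw [← Finset.card_erase_of_mem hv, ← Finset.card_powersetCard]
  apply Finset.card_nbij' (fun R => R.erase v) (fun R => insert v R)
  · intro R hR
    simp only [mem_coe, mem_filter, mem_powersetCard] at hR
    simp only [mem_coe, mem_powersetCard]
    exact ⟨erase_subset_erase v hR.1.1, by rw [card_erase_of_mem hR.2, hR.1.2]; rfl⟩
  · intro R hR
    simp only [mem_coe, mem_powersetCard] at hR
    have hvR : v ∉ R := fun h => (Finset.notMem_erase v U) (hR.1 h)
    simp only [mem_coe, mem_filter, mem_powersetCard]
    refine ⟨⟨?_, ?_⟩, mem_insert_self _ _⟩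
    · exact insert_subset hv (hR.1.trans (erase_subset _ _))
    · rw [card_insert_of_notMem hvR, hR.2]
  · intro R hR
    simp only [mem_coe, mem_filter] at hR
    exact insert_erase hR.2
  · intro R hR
    simp only [mem_coe, mem_powersetCard] at hR
    exact erase_insert (fun h => (Finset.notMem_erase v U) (hR.1 h))

lemma sum_sum_powersetCard {V : Type*} [DecidableEq V] (U : Finset V) (r : ℕ) (f : V → ℝ) :
    ∑ R ∈ U.powersetCard (r+1), ∑ v ∈ R, f v
      = ((U.card - 1).choose r : ℝ) * ∑ v ∈ U, f v := by
  calc ∑ R ∈ U.powersetCard (r+1), ∑ v ∈ R, f v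
      = ∑ R ∈ U.powersetCard (r+1), ∑ v ∈ U, if v ∈ R then f v else 0 := by
        apply Finset.sum_congr rfl
        intro R hR
        rw [mem_powersetCard] at hR
        rw [← Finset.sum_filter, Finset.filter_mem_eq_inter, Finset.inter_eq_right.2 hR.1]
    _ = ∑ v ∈ U, ∑ R ∈ U.powersetCard (r+1), if v ∈ R then f v else 0 := Finset.sum_comm
    _ = ∑ v ∈ U, ((U.card - 1).choose r : ℝ) * f v := by
        apply Finset.sum_congr rfl
        intro v hv
        rw [← Finset.sum_filter, Finset.sum_const, card_filter_mem U r v hv, nsmul_eq_mul]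
    _ = _ := by rw [Finset.mul_sum]

/-- Random correction step (Lemma 3.1). (i) Adding a uniformly random `r`-subset of a set
`U ⊆ V \ Ŝ` with `r/|U| ≤ ε` keeps, in expectation, a `(1-ε)` fraction of the cut value;
(ii) likewise for deleting a uniformly random `r`-subset of `Ŝ` with `r/|Ŝ| ≤ ε`.
Expectations are written as averages over all `r`-element subsets. -/
theorem random_correction {V : Type*} [Fintype V] [DecidableEq V]
    (w : V → V → ℝ) (hsymm : ∀ u v, w u v = w v u) (hnonneg : ∀ u v, 0 ≤ w u v)
    (Shat : Finset V) (ε : ℝ) (hε0 : 0 ≤ ε) (hε1 : ε < 1) :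
    (∀ (U : Finset V) (r : ℕ), Disjoint U Shat → U.Nonempty → r ≤ U.card →
        (r : ℝ) / (U.card : ℝ) ≤ ε →
        (1 - ε) * cutVal w Shat ≤
          (∑ R ∈ U.powersetCard r, cutVal w (Shat ∪ R)) / ((U.powersetCard r).card : ℝ)) ∧
    (∀ r : ℕ, Shat.Nonempty → r ≤ Shat.card → (r : ℝ) / (Shat.card : ℝ) ≤ ε →
        (1 - ε) * cutVal w Shat ≤
          (∑ R ∈ Shat.powersetCard r, cutVal w (Shat \ R)) /
            ((Shat.powersetCard r).card : ℝ)) := by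
  have hC : 0 ≤ cutVal w Shat := cutVal_nonneg w hnonneg Shat
  constructor
  · intro U r hdisj hU hrle hre
    have hnpos : 0 < ((U.powersetCard r).card : ℝ) := by
      rw [Finset.card_powersetCard]
      exact_mod_cast Nat.choose_pos hrle
    rw [le_div_iff₀ hnpos]
    have hUpos : 0 < (U.card : ℝ) := by exact_mod_cast Finset.card_pos.2 hU
    match r, hrle, hre with
    | 0, _, _ =>
      simp only [Finset.powersetCard_zero, Finset.sum_singleton, Finset.card_singleton,
        Finset.union_empty, Nat.cast_one, mul_one]
      nlinarith
    | (r+1 : ℕ), hrle, hre =>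
      set n : ℝ := ((U.powersetCard (r+1)).card : ℝ) with hn
      set c : ℝ := (((U.card - 1).choose r : ℕ) : ℝ) with hc
      have hnn : 0 < n := hnpos
      have hchoose : (U.card : ℝ) * c = (r+1) * n := by
        rw [hc, hn, Finset.card_powersetCard]
        have h1 : U.card - 1 + 1 = U.card := Nat.sub_add_cancel (Finset.card_pos.2 hU)
        have key := Nat.add_one_mul_choose_eq (U.card - 1) r
        simp only [Nat.succ_eq_add_one, h1] at key
        have := congrArg (Nat.cast : ℕ → ℝ) key
        push_cast at this
        linarith
      have hre' : ((r:ℝ)+1) ≤ ε * U.card := by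
        rw [div_le_iff₀ hUpos] at hre
        push_cast at hre ⊢
        linarith
      have hcε : c ≤ ε * n := by
        have h1 : ((r:ℝ)+1) * n ≤ ε * U.card * n :=
          mul_le_mul_of_nonneg_right hre' hnn.le
        nlinarith
      have hc0 : 0 ≤ c := by positivity
      -- X = total weight from Shat to U
      set X : ℝ := ∑ u ∈ Shat, ∑ v ∈ U, w u v with hX
      have hX0 : 0 ≤ X := Finset.sum_nonneg fun u _ => Finset.sum_nonneg fun v _ => hnonneg u v
      have hXC : X ≤ cutVal w Shat := by
        apply Finset.sum_le_sum
        intro u _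
        apply Finset.sum_le_sum_of_subset_of_nonneg
        · exact fun x hx => Finset.mem_compl.2 (Finset.disjoint_left.mp hdisj hx)
        · intro v _ _; exact hnonneg u v
      have hT : ∑ R ∈ U.powersetCard (r+1), ∑ u ∈ Shat, ∑ v ∈ R, w u v = c * X := by
        rw [Finset.sum_comm]
        calc ∑ u ∈ Shat, ∑ R ∈ U.powersetCard (r+1), ∑ v ∈ R, w u v
            = ∑ u ∈ Shat, c * ∑ v ∈ U, w u v :=
              Finset.sum_congr rfl fun u _ => sum_sum_powersetCard U r (w u)
          _ = c * X := by rw [hX, Finset.mul_sum]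
      calc (1 - ε) * cutVal w Shat * n
          ≤ n * cutVal w Shat - c * X := by nlinarith
        _ = ∑ R ∈ U.powersetCard (r+1), (cutVal w Shat - ∑ u ∈ Shat, ∑ v ∈ R, w u v) := by
            rw [Finset.sum_sub_distrib, Finset.sum_const, hT, nsmul_eq_mul]
        _ ≤ ∑ R ∈ U.powersetCard (r+1), cutVal w (Shat ∪ R) := by
            apply Finset.sum_le_sum
            intro R hR
            rw [Finset.mem_powersetCard] at hR
            exact cut_union w hnonneg Shat R
              (Finset.disjoint_of_subset_left hR.1 hdisj)
  · intro r hS hrle hre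
    have hnpos : 0 < ((Shat.powersetCard r).card : ℝ) := by
      rw [Finset.card_powersetCard]
      exact_mod_cast Nat.choose_pos hrle
    rw [le_div_iff₀ hnpos]
    have hUpos : 0 < (Shat.card : ℝ) := by exact_mod_cast Finset.card_pos.2 hS
    match r, hrle, hre with
    | 0, _, _ =>
      simp only [Finset.powersetCard_zero, Finset.sum_singleton, Finset.card_singleton,
        Finset.sdiff_empty, Nat.cast_one, mul_one]
      nlinarith
    | (r+1 : ℕ), hrle, hre =>
      set n : ℝ := ((Shat.powersetCard (r+1)).card : ℝ) with hn
      set c : ℝ := (((Shat.card - 1).choose r : ℕ) : ℝ) with hc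
      have hnn : 0 < n := hnpos
      have hchoose : (Shat.card : ℝ) * c = (r+1) * n := by
        rw [hc, hn, Finset.card_powersetCard]
        have h1 : Shat.card - 1 + 1 = Shat.card := Nat.sub_add_cancel (Finset.card_pos.2 hS)
        have key := Nat.add_one_mul_choose_eq (Shat.card - 1) r
        simp only [Nat.succ_eq_add_one, h1] at key
        have := congrArg (Nat.cast : ℕ → ℝ) key
        push_cast at this
        linarith
      have hre' : ((r:ℝ)+1) ≤ ε * Shat.card := by
        rw [div_le_iff₀ hUpos] at hre
        push_cast at hre ⊢
        linarith
      have hcε : c ≤ ε * n := by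
        have h1 : ((r:ℝ)+1) * n ≤ ε * Shat.card * n :=
          mul_le_mul_of_nonneg_right hre' hnn.le
        nlinarith
      have hc0 : 0 ≤ c := by positivity
      have hT : ∑ R ∈ Shat.powersetCard (r+1), ∑ u ∈ R, ∑ v ∈ Shatᶜ, w u v
          = c * cutVal w Shat :=
        sum_sum_powersetCard Shat r (fun u => ∑ v ∈ Shatᶜ, w u v)
      calc (1 - ε) * cutVal w Shat * n
          ≤ n * cutVal w Shat - c * cutVal w Shat := by nlinarith
        _ = ∑ R ∈ Shat.powersetCard (r+1),
              (cutVal w Shat - ∑ u ∈ R, ∑ v ∈ Shatᶜ, w u v) := by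
            rw [Finset.sum_sub_distrib, Finset.sum_const, hT, nsmul_eq_mul]
        _ ≤ ∑ R ∈ Shat.powersetCard (r+1), cutVal w (Shat \ R) := by
            apply Finset.sum_le_sum
            intro R hR
            rw [Finset.mem_powersetCard] at hR
            exact cut_sdiff w hnonneg Shat R hR.1
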